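/- Let q > 0 be real and let H_q(k), for k ∈ ℝ², be the 2×2 complex matrix with entries H₁₁ = 3+q, H₁₂ = −1−e^{ik₁}−e^{ik₂}, H₂₁ = −1−e^{−ik₁}−e^{−ik₂}, H₂₂ = 3−q. Then the union ⋃_{k ∈ (−π,π]²} spectrum(H_q(k)) equals [3−√(9+q²), 3−q] ∪ [3+q, 3+√(9+q²)] (real closed intervals regarded as subsets of ℂ). -/

import Mathlib

open scoped Real

/-- The Floquet matrix of the Schrödinger operator on the hexagonal lattice with
potential `±q` on the two fundamental vertices. -/
noncomputable def hexFloquet (q k₁ k₂ : ℝ) : Matrix (Fin 2) (Fin 2) ℂ :=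
  !![((3 + q : ℝ) : ℂ), -1 - Complex.exp (Complex.I * k₁) - Complex.exp (Complex.I * k₂);
     -1 - Complex.exp (-(Complex.I * k₁)) - Complex.exp (-(Complex.I * k₂)), ((3 - q : ℝ) : ℂ)]

lemma conj_exp (k : ℝ) : Complex.exp (-(Complex.I * k)) = (starRingEnd ℂ) (Complex.exp (Complex.I * k)) := by
  rw [← Complex.exp_conj]; congr 1; simp

lemma spec_iff (q k₁ k₂ : ℝ) (μ : ℂ) :
    μ ∈ spectrum ℂ (hexFloquet q k₁ k₂) ↔
      (μ - 3)^2 = (q:ℂ)^2 + (Complex.normSq (1 + Complex.exp (Complex.I*k₁) + Complex.exp (Complex.I*k₂)) : ℂ) := by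
  rw [spectrum.mem_iff, Matrix.isUnit_iff_isUnit_det, isUnit_iff_ne_zero, not_ne_iff]
  have hdet : (algebraMap ℂ (Matrix (Fin 2) (Fin 2) ℂ) μ - hexFloquet q k₁ k₂).det
      = (μ - (3+q))*(μ - (3-q)) - (-1 - Complex.exp (Complex.I * k₁) - Complex.exp (Complex.I * k₂)) * (-1 - Complex.exp (-(Complex.I * k₁)) - Complex.exp (-(Complex.I * k₂))) := by
    simp [hexFloquet, Matrix.det_fin_two, Matrix.algebraMap_matrix_apply]
    ring
  rw [hdet, conj_exp k₁, conj_exp k₂]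
  have h2 : (-1 - Complex.exp (Complex.I * k₁) - Complex.exp (Complex.I * k₂)) * (-1 - (starRingEnd ℂ) (Complex.exp (Complex.I * k₁)) - (starRingEnd ℂ) (Complex.exp (Complex.I * k₂)))
      = (1 + Complex.exp (Complex.I * k₁) + Complex.exp (Complex.I * k₂)) * (starRingEnd ℂ) (1 + Complex.exp (Complex.I * k₁) + Complex.exp (Complex.I * k₂)) := by
    rw [map_add, map_add, map_one]; ring
  rw [h2, Complex.mul_conj]
  constructor
  · intro h; linear_combination h
  · intro h; linear_combination h

lemma normSq_le_nine (k₁ k₂ : ℝ) :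
    Complex.normSq (1 + Complex.exp (Complex.I*k₁) + Complex.exp (Complex.I*k₂)) ≤ 9 := by
  have h : ‖1 + Complex.exp (Complex.I*k₁) + Complex.exp (Complex.I*k₂)‖ ≤ 3 := by
    have h1 : ‖Complex.exp (Complex.I*(k₁:ℝ))‖ = 1 := by
      rw [mul_comm]; exact Complex.norm_exp_ofReal_mul_I k₁
    have h2 : ‖Complex.exp (Complex.I*(k₂:ℝ))‖ = 1 := by
      rw [mul_comm]; exact Complex.norm_exp_ofReal_mul_I k₂
    calc ‖1 + Complex.exp (Complex.I*k₁) + Complex.exp (Complex.I*k₂)‖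
        ≤ ‖1 + Complex.exp (Complex.I*k₁)‖ + ‖Complex.exp (Complex.I*k₂)‖ := norm_add_le _ _
      _ ≤ ‖(1:ℂ)‖ + ‖Complex.exp (Complex.I*k₁)‖ + ‖Complex.exp (Complex.I*k₂)‖ := by
          have := norm_add_le (1:ℂ) (Complex.exp (Complex.I*k₁)); linarith
      _ = 3 := by rw [h1, h2, norm_one]; norm_num
  have := Complex.sq_norm (1 + Complex.exp (Complex.I*k₁) + Complex.exp (Complex.I*k₂))
  nlinarith [norm_nonneg (1 + Complex.exp (Complex.I*k₁) + Complex.exp (Complex.I*k₂))]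

/-- the union of the spectra of `H_q(k)` over the Brillouin zone `(−π,π]²`
equals `[3−√(9+q²), 3−q] ∪ [3+q, 3+√(9+q²)]`. -/
theorem stmt_11 (q : ℝ) (hq : 0 < q) :
    (⋃ k₁ ∈ Set.Ioc (-π) π, ⋃ k₂ ∈ Set.Ioc (-π) π, spectrum ℂ (hexFloquet q k₁ k₂)) =
      (fun x : ℝ => (x : ℂ)) ''
        (Set.Icc (3 - Real.sqrt (9 + q^2)) (3 - q) ∪
         Set.Icc (3 + q) (3 + Real.sqrt (9 + q^2))) := by
  have hR : Real.sqrt (9 + q^2) ^ 2 = 9 + q^2 := Real.sq_sqrt (by positivity)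
  have hRnn : 0 ≤ Real.sqrt (9 + q^2) := Real.sqrt_nonneg _
  ext x
  simp only [Set.mem_iUnion, Set.mem_image, Set.mem_union, Set.mem_Icc, Set.mem_Ioc,
    exists_prop]
  constructor
  · rintro ⟨k₁, hk₁, k₂, hk₂, hx⟩
    rw [spec_iff] at hx
    set s := Complex.normSq (1 + Complex.exp (Complex.I*k₁) + Complex.exp (Complex.I*k₂)) with hs
    have hs0 : 0 ≤ s := Complex.normSq_nonneg _
    have hs9 : s ≤ 9 := normSq_le_nine k₁ k₂
    set d := Real.sqrt (q^2 + s) with hd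
    have hd0 : 0 ≤ d := Real.sqrt_nonneg _
    have hd2 : d^2 = q^2 + s := Real.sq_sqrt (by positivity)
    have hqd : q ≤ d := by nlinarith
    have hdR : d ≤ Real.sqrt (9 + q^2) := by nlinarith
    have hdc : ((d:ℝ):ℂ)^2 = (q:ℂ)^2 + (s:ℂ) := by exact_mod_cast congrArg (Complex.ofReal) hd2
    have hfac : (x - 3 - d) * (x - 3 + d) = 0 := by
      linear_combination hx - hdc
    rcases mul_eq_zero.1 hfac with h | h
    · exact ⟨3 + d, Or.inr ⟨by linarith, by linarith⟩, by push_cast; linear_combination -h⟩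
    · exact ⟨3 - d, Or.inl ⟨by linarith, by linarith⟩, by push_cast; linear_combination -h⟩
  · rintro ⟨r, hr, rfl⟩
    set t := (r - 3)^2 - q^2 with ht
    have h09 : 0 ≤ t ∧ t ≤ 9 := by
      rcases hr with ⟨h1, h2⟩ | ⟨h1, h2⟩
      · constructor <;> nlinarith
      · constructor <;> nlinarith
    obtain ⟨h0, h9⟩ := h09
    have hst : Real.sqrt t ≤ 3 := by
      have := Real.sqrt_le_sqrt h9
      rwa [show (9:ℝ) = 3^2 by norm_num, Real.sqrt_sq (by norm_num : (0:ℝ) ≤ 3)] at this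
    have hst0 : 0 ≤ Real.sqrt t := Real.sqrt_nonneg _
    set c := (Real.sqrt t - 1)/2 with hc
    have hc1 : -1 ≤ c := by rw [hc]; linarith
    have hc2 : c ≤ 1 := by rw [hc]; linarith
    refine ⟨Real.arccos c, ⟨?_, Real.arccos_le_pi c⟩, -Real.arccos c, ⟨?_, ?_⟩, ?_⟩
    · have := Real.arccos_nonneg c; linarith [Real.pi_pos]
    · have hlt : Real.arccos c < π := by
        rw [Real.arccos_eq_pi_div_two_sub_arcsin]
        have : -(π/2) < Real.arcsin c := Real.neg_pi_div_two_lt_arcsin.2 (by linarith [hst0] : (-1:ℝ) < c)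
        linarith
      linarith
    · have := Real.arccos_nonneg c; linarith [Real.pi_pos]
    · rw [spec_iff]
      have hsum : (1 + Complex.exp (Complex.I * (Real.arccos c : ℝ)) + Complex.exp (Complex.I * ((-Real.arccos c : ℝ) : ℝ)))
          = ((Real.sqrt t : ℝ) : ℂ) := by
        rw [mul_comm Complex.I ((Real.arccos c : ℝ) : ℂ), mul_comm Complex.I (((-Real.arccos c : ℝ)) : ℂ),
          Complex.exp_mul_I, Complex.exp_mul_I]
        push_cast
        rw [Complex.cos_neg, Complex.sin_neg]
        rw [← Complex.ofReal_cos]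
        rw [Real.cos_arccos hc1 hc2]
        push_cast [hc]
        ring
      rw [hsum]
      have hns : Complex.normSq ((Real.sqrt t : ℝ) : ℂ) = t := by
        rw [Complex.normSq_ofReal, Real.mul_self_sqrt h0]
      rw [hns]
      rw [ht]
      push_cast
      ring
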